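/- The monic associated Hermite polynomials $H_n(x,c)$ defined by $H_n(x,c)=\sum_{k=0}^{\lfloor n/2\rfloor}(-2)^{-k}\frac{(c)_k (n-k)!}{k!(n-2k)!}H_{n-2k}(x)$ satisfy the three-term recurrence $xH_n(x,c)=H_{n+1}(x,c)+\frac{n+c}{2}H_{n-1}(x,c)$ for $n\ge 0$, with $H_{-1}(x,c)=0$ and $H_0(x,c)=1$. -/

import Mathlib

open Finset

noncomputable def poch (a : ℝ) (k : ℕ) : ℝ := ∏ i ∈ Finset.range k, (a + i)

noncomputable def hermiteM : ℕ → Polynomial ℝ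
  | 0 => 1
  | 1 => Polynomial.X
  | (n + 2) => Polynomial.X * hermiteM (n + 1) - Polynomial.C (((n : ℝ) + 1) / 2) * hermiteM n

noncomputable def assocHermite (c : ℝ) (n : ℕ) : Polynomial ℝ :=
  ∑ k ∈ Finset.range (n / 2 + 1),
    Polynomial.C ((-(1 : ℝ)/2) ^ k * poch c k * ((n - k).factorial : ℝ)
        / ((k.factorial : ℝ) * ((n - 2 * k).factorial : ℝ))) * hermiteM (n - 2 * k)

noncomputable def aco (c : ℝ) (n k : ℕ) : ℝ :=
  (-(1 : ℝ)/2) ^ k * poch c k * ((n - k).factorial : ℝ)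
    / ((k.factorial : ℝ) * ((n - 2 * k).factorial : ℝ))

noncomputable def bco (c : ℝ) (n k : ℕ) : ℝ := if 2 * k ≤ n then aco c n k else 0

lemma hermX (m : ℕ) :
    Polynomial.X * hermiteM m
      = hermiteM (m + 1) + Polynomial.C ((m : ℝ)/2) * hermiteM (m - 1) := by
  match m with
  | 0 => simp [hermiteM]
  | (k + 1) =>
    show Polynomial.X * hermiteM (k+1) = hermiteM (k+2) + _
    rw [show hermiteM (k+2) = Polynomial.X * hermiteM (k + 1)
        - Polynomial.C (((k : ℝ) + 1) / 2) * hermiteM k from rfl]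
    push_cast
    ring

lemma assoc_ext (c : ℝ) (n M : ℕ) (h : n / 2 + 1 ≤ M) :
    assocHermite c n
      = ∑ k ∈ Finset.range M, Polynomial.C (bco c n k) * hermiteM (n - 2 * k) := by
  rw [assocHermite]
  rw [Finset.sum_congr rfl (fun k hk => ?_), Finset.sum_subset (Finset.range_subset_range.mpr h)
    (fun x _ hx => ?_)]
  · have hx' : ¬ 2 * x ≤ n := by
      have : ¬ x < n / 2 + 1 := fun h => hx (Finset.mem_range.mpr h); omega
    simp [bco, hx']
  · have h2 : 2 * k ≤ n := by have := Finset.mem_range.mp hk; omega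
    simp [bco, h2, aco]

lemma bco_zero (c : ℝ) (n : ℕ) : bco c n 0 = 1 := by
  simp only [bco, aco, poch, Nat.zero_le, if_pos, mul_zero, Nat.sub_zero, pow_zero,
    Finset.range_zero, Finset.prod_empty, Nat.factorial_zero, Nat.cast_one, one_mul, mul_one]
  exact div_self (Nat.cast_ne_zero.mpr n.factorial_ne_zero)

lemma poch_succ (c : ℝ) (j : ℕ) : poch c (j + 1) = poch c j * (c + j) := by
  rw [poch, poch, Finset.prod_range_succ]

lemma key (c : ℝ) (n j : ℕ) (hn : 1 ≤ n) :
    bco c n (j + 1) + bco c n j * ((n - 2 * j : ℕ) : ℝ) / 2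
      = bco c (n + 1) (j + 1) + ((n : ℝ) + c) / 2 * bco c (n - 1) j := by
  by_cases h1 : 2 * (j + 1) ≤ n
  · -- main case: n = m + 2j + 2
    obtain ⟨m, rfl⟩ : ∃ m, n = m + 2 * j + 2 := ⟨n - 2*j - 2, by omega⟩
    have g1 : 2 * (j + 1) ≤ m + 2 * j + 2 := by omega
    have g2 : 2 * j ≤ m + 2 * j + 2 := by omega
    have g3 : 2 * (j + 1) ≤ m + 2 * j + 2 + 1 := by omega
    have g4 : 2 * j ≤ m + 2 * j + 2 - 1 := by omega
    simp only [bco, if_pos g1, if_pos g2, if_pos g3, if_pos g4, aco]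
    rw [show m + 2*j + 2 - (j+1) = m + j + 1 from by omega,
        show m + 2*j + 2 - 2*(j+1) = m from by omega,
        show m + 2*j + 2 - j = m + j + 2 from by omega,
        show m + 2*j + 2 - 2*j = m + 2 from by omega,
        show m + 2*j + 2 + 1 - (j+1) = m + j + 2 from by omega,
        show m + 2*j + 2 + 1 - 2*(j+1) = m + 1 from by omega,
        show m + 2*j + 2 - 1 - j = m + j + 1 from by omega,
        show m + 2*j + 2 - 1 - 2*j = m + 1 from by omega,
        poch_succ]
    have e1 : ((m+j+2).factorial : ℝ) = (m+j+2) * (m+j+1).factorial := by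
      rw [show m+j+2 = (m+j+1)+1 from rfl, Nat.factorial_succ]; push_cast; ring
    have e2 : ((m+2).factorial : ℝ) = (m+2) * ((m+1) * m.factorial) := by
      rw [show m+2 = (m+1)+1 from rfl, Nat.factorial_succ, Nat.factorial_succ]; push_cast; ring
    have e3 : ((m+1).factorial : ℝ) = (m+1) * m.factorial := by
      rw [Nat.factorial_succ]; push_cast; ring
    have e4 : ((j+1).factorial : ℝ) = (j+1) * j.factorial := by
      rw [Nat.factorial_succ]; push_cast; ring
    rw [e1, e2, e3, e4]
    have hj : (j.factorial : ℝ) ≠ 0 := Nat.cast_ne_zero.mpr j.factorial_ne_zero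
    have hm : (m.factorial : ℝ) ≠ 0 := Nat.cast_ne_zero.mpr m.factorial_ne_zero
    have hmj : ((m+j+1).factorial : ℝ) ≠ 0 := Nat.cast_ne_zero.mpr (m+j+1).factorial_ne_zero
    have h5 : ((j:ℝ)+1) ≠ 0 := by positivity
    have h6 : ((m:ℝ)+1) ≠ 0 := by positivity
    have h7 : ((m:ℝ)+2) ≠ 0 := by positivity
    push_cast
    field_simp
    ring
  · by_cases h2 : 2 * (j + 1) = n + 1
    · -- n = 2j + 1
      obtain rfl : n = 2 * j + 1 := by omega
      have g1 : ¬ 2 * (j + 1) ≤ 2*j+1 := by omega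
      have g2 : 2 * j ≤ 2*j+1 := by omega
      have g3 : 2 * (j + 1) ≤ 2*j+1 + 1 := by omega
      have g4 : 2 * j ≤ 2*j+1 - 1 := by omega
      simp only [bco, if_pos g2, if_neg g1, if_pos g3, if_pos g4, aco]
      rw [show 2*j + 1 - j = j + 1 from by omega,
          show 2*j + 1 - 2*j = 1 from by omega,
          show 2*j + 1 + 1 - (j+1) = j + 1 from by omega,
          show 2*j + 1 + 1 - 2*(j+1) = 0 from by omega,
          show 2*j + 1 - 1 - j = j from by omega,
          show 2*j + 1 - 1 - 2*j = 0 from by omega,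
          poch_succ]
      have e4 : ((j+1).factorial : ℝ) = (j+1) * j.factorial := by
        rw [Nat.factorial_succ]; push_cast; ring
      rw [e4]
      have hj : (j.factorial : ℝ) ≠ 0 := Nat.cast_ne_zero.mpr j.factorial_ne_zero
      have h5 : ((j:ℝ)+1) ≠ 0 := by positivity
      simp only [Nat.factorial_zero, Nat.factorial_one, Nat.cast_one]
      push_cast
      field_simp
      ring
    · by_cases h3 : 2 * (j + 1) = n + 2
      · -- n = 2j
        obtain rfl : n = 2 * j := by omega
        have g1 : ¬ 2 * (j + 1) ≤ 2*j := by omega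
        have g2 : 2 * j ≤ 2*j := by omega
        have g3 : ¬ 2 * (j + 1) ≤ 2*j + 1 := by omega
        have g4 : ¬ 2 * j ≤ 2*j - 1 := by omega
        simp only [bco, if_pos g2, if_neg g1, if_neg g3, if_neg g4]
        rw [show 2*j - 2*j = 0 from by omega]
        norm_num
      · -- all guards false
        have g1 : ¬ 2 * (j + 1) ≤ n := by omega
        have g2 : ¬ 2 * j ≤ n := by omega
        have g3 : ¬ 2 * (j + 1) ≤ n + 1 := by omega
        have g4 : ¬ 2 * j ≤ n - 1 := by omega
        simp only [bco, if_neg g1, if_neg g2, if_neg g3, if_neg g4]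
        ring

/-- The associated Hermite polynomials satisfy
`x H_n(x,c) = H_{n+1}(x,c) + ((n+c)/2) H_{n-1}(x,c)` for `n ≥ 0`
(with `H_{-1}(x,c) = 0`), and `H_0(x,c) = 1`. -/
theorem stmt11 (c : ℝ) :
    assocHermite c 0 = 1 ∧
    ∀ n : ℕ,
      Polynomial.X * assocHermite c n
        = assocHermite c (n + 1)
          + Polynomial.C (((n : ℝ) + c) / 2) *
              (if n = 0 then 0 else assocHermite c (n - 1)) := by
  constructor
  · simp [assocHermite, poch, hermiteM]
  intro n
  by_cases hn : n = 0
  · subst hn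
    rw [if_pos rfl, mul_zero, add_zero]
    simp [assocHermite, poch, hermiteM]
  · rw [if_neg hn]
    have hn1 : 1 ≤ n := Nat.one_le_iff_ne_zero.mpr hn
    set M := n + 2 with hM
    -- Claim A : expand LHS
    have claimA : Polynomial.X * assocHermite c n
        = (∑ k ∈ Finset.range M, Polynomial.C (bco c n k) * hermiteM (n + 1 - 2 * k))
          + ∑ k ∈ Finset.range M,
              Polynomial.C (bco c n k * ((n - 2 * k : ℕ) : ℝ) / 2) * hermiteM (n - 2 * k - 1) := by
      rw [assoc_ext c n M (by omega), Finset.mul_sum, ← Finset.sum_add_distrib]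
      refine Finset.sum_congr rfl (fun k hk => ?_)
      rw [show Polynomial.X * (Polynomial.C (bco c n k) * hermiteM (n - 2*k))
          = Polynomial.C (bco c n k) * (Polynomial.X * hermiteM (n - 2*k)) from by ring,
        hermX]
      by_cases h2 : 2 * k ≤ n
      · rw [show n - 2*k + 1 = n + 1 - 2*k from by omega]
        rw [mul_add, mul_div_assoc, Polynomial.C_mul]
        ring
      · have : bco c n k = 0 := by simp [bco, h2]
        simp [this]
    -- Claim B : expand assoc (n+1) over range (M+1)
    rw [claimA, assoc_ext c (n+1) (M+1) (by omega), assoc_ext c (n-1) M (by omega)]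
    rw [Finset.mul_sum]
    -- normalize RHS second sum coefficients
    have rhs2 : ∀ k ∈ Finset.range M,
        Polynomial.C (((n:ℝ) + c)/2) * (Polynomial.C (bco c (n-1) k) * hermiteM (n - 1 - 2*k))
          = Polynomial.C (((n:ℝ) + c)/2 * bco c (n-1) k) * hermiteM (n - 1 - 2*k) := by
      intro k _
      rw [Polynomial.C_mul]; ring
    rw [Finset.sum_congr rfl rhs2]
    -- extend LHS first sum to range (M+1) (last term vanishes)
    have extL : (∑ k ∈ Finset.range M, Polynomial.C (bco c n k) * hermiteM (n + 1 - 2 * k))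
        = ∑ k ∈ Finset.range (M+1), Polynomial.C (bco c n k) * hermiteM (n + 1 - 2 * k) := by
      have h0 : bco c n M = 0 := by simp only [bco, if_neg (by omega : ¬ 2 * M ≤ n)]
      conv_rhs => rw [Finset.sum_range_succ]
      rw [h0]
      simp
    rw [extL]
    -- peel off k = 0 from both range (M+1) sums
    rw [Finset.sum_range_succ' (fun k => Polynomial.C (bco c n k) * hermiteM (n + 1 - 2 * k)) M,
        Finset.sum_range_succ' (fun k => Polynomial.C (bco c (n+1) k) * hermiteM (n + 1 - 2 * k)) M]
    rw [bco_zero, bco_zero]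
    rw [add_right_comm, add_right_comm (∑ k ∈ Finset.range M,
        Polynomial.C (bco c (n+1) (k+1)) * hermiteM (n + 1 - 2 * (k+1)))]
    congr 1
    rw [← Finset.sum_add_distrib, ← Finset.sum_add_distrib]
    refine Finset.sum_congr rfl (fun k _ => ?_)
    rw [show n + 1 - 2 * (k + 1) = n - 2 * k - 1 from by omega,
        show n - 1 - 2 * k = n - 2 * k - 1 from by omega,
        ← add_mul, ← Polynomial.C_add, ← add_mul, ← Polynomial.C_add]
    congr 2
    exact key c n k hn1
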